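/- Let R be an N-graded Noetherian ring with I = R_{≥n} for some n ≥ 1 such that R_{≥nt} = I^t for all t ≥ 1. Then in the associated graded ring G = ⊕_{t≥0} I^t/I^{t+1}, every homogeneous element represented by x ∈ R of internal degree strictly greater than nt (in the t-th piece I^t/I^{t+1}) is nilpotent; consequently the reduction of G is isomorphic to the Veronese subring ⊕_{t≥0} R_{nt} when R is reduced. -/

import Mathlib

open scoped DirectSum

set_option maxHeartbeats 1000000 in
set_option synthInstance.maxHeartbeats 1000000 in

/-- Let `R` be an `ℕ`-graded Noetherian ring with `I = R_{≥n}` for some `n ≥ 1` such that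
`R_{≥nt} = Iᵗ` for all `t ≥ 1`.  Realize the associated graded ring
`G = ⊕_{t ≥ 0} Iᵗ/Iᵗ⁺¹` as `N/K`, where `N = ⊕ Iᵗ Xᵗ ⊆ R[X]` is the Rees algebra and
`K ⊆ N` the ideal of elements whose `t`-th coefficient lies in `Iᵗ⁺¹`.  Then every homogeneous
element of the `t`-th piece represented by `x ∈ R` of internal degree `d > nt` is nilpotent in
`G`; consequently, when `R` is reduced, the reduction `G/nilradical(G)` is isomorphic to the
Veronese subring `V = ⊕_{t ≥ 0} R_{nt}` of `R`. -/
theorem assoc_graded_nilpotent_and_red_iso_veronese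
    (R : Type*) [CommRing R] [IsNoetherianRing R] [IsReduced R]
    (𝒜 : ℕ → AddSubgroup R) [GradedRing 𝒜]
    (n : ℕ) (hn : 1 ≤ n) (I : Ideal R)
    (hI : ∀ x : R, x ∈ I ↔ ∀ i : ℕ, i < n → (DirectSum.decompose 𝒜 x i : R) = 0)
    (hpow : ∀ t : ℕ, 1 ≤ t → ∀ x : R,
      x ∈ I ^ t ↔ ∀ i : ℕ, i < n * t → (DirectSum.decompose 𝒜 x i : R) = 0)
    (N : Subalgebra R (Polynomial R))
    (hN : ∀ p : Polynomial R, p ∈ N ↔ ∀ t : ℕ, p.coeff t ∈ I ^ t)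
    (K : Ideal ↥N)
    (hK : ∀ q : ↥N, q ∈ K ↔ ∀ t : ℕ, (q : Polynomial R).coeff t ∈ I ^ (t + 1))
    (V : Subring R)
    (hV : ∀ x : R, x ∈ V ↔ ∀ i : ℕ, ¬ n ∣ i → (DirectSum.decompose 𝒜 x i : R) = 0) :
    (∀ (t d : ℕ) (x : R), x ∈ 𝒜 d → n * t < d →
      ∀ q : ↥N, (q : Polynomial R) = Polynomial.monomial t x →
        IsNilpotent (Ideal.Quotient.mk K q)) ∧
      Nonempty ((↥N ⧸ K) ⧸ nilradical (↥N ⧸ K) ≃+* ↥V) := by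
  classical
  have hn0 : n ≠ 0 := by omega
  -- the graded components, as additive maps
  obtain ⟨dc, hdc⟩ : ∃ dc : ℕ → R →+ R, ∀ i x, dc i x = (DirectSum.decompose 𝒜 x i : R) := by
    refine ⟨fun i => ⟨⟨fun x => (DirectSum.decompose 𝒜 x i : R), by simp⟩, ?_⟩, fun _ _ => rfl⟩
    intro a b
    simp [DirectSum.decompose_add, DirectSum.add_apply]
  have dc_mem : ∀ (i : ℕ) (x : R), dc i x ∈ 𝒜 i := by
    intro i x; rw [hdc]; exact SetLike.coe_mem _
  have dc_same : ∀ {i : ℕ} {x : R}, x ∈ 𝒜 i → dc i x = x := by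
    intro i x h; rw [hdc]; exact DirectSum.decompose_of_mem_same 𝒜 h
  have dc_ne : ∀ {i j : ℕ} {x : R}, x ∈ 𝒜 i → i ≠ j → dc j x = 0 := by
    intro i j x h hij; rw [hdc]; exact DirectSum.decompose_of_mem_ne 𝒜 h hij
  have dc_all_zero : ∀ x : R, (∀ i, dc i x = 0) → x = 0 := by
    intro x hx
    rw [← DirectSum.sum_support_decompose 𝒜 x]
    refine Finset.sum_eq_zero fun i _ => ?_
    rw [← hdc]; exact hx i
  -- low components of elements of `I ^ t` vanish
  have hlow : ∀ (t : ℕ) (x : R), x ∈ I ^ t → ∀ i, i < n * t → dc i x = 0 := by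
    intro t x hx i hi
    rcases Nat.eq_zero_or_pos t with rfl | ht
    · omega
    · rw [hdc]; exact (hpow t ht x).1 hx i hi
  -- a product of elements with vanishing low components has vanishing low components
  have hmulC : ∀ (a b : R) (α β : ℕ), (∀ i, i < α → dc i a = 0) → (∀ i, i < β → dc i b = 0) →
      ∀ i, i < α + β → dc i (a * b) = 0 := by
    intro a b α β ha hb i hi
    rw [hdc, DirectSum.decompose_mul, DirectSum.coe_mul_apply]
    refine Finset.sum_eq_zero ?_
    rintro ⟨k, l⟩ hkl
    simp only [Finset.mem_filter, Finset.mem_product, DFinsupp.mem_support_toFun] at hkl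
    obtain ⟨⟨hk, hl⟩, hsum⟩ := hkl
    exfalso
    have hk' : α ≤ k := by
      by_contra h
      refine hk ?_
      have := ha k (by omega)
      rw [hdc] at this
      exact Subtype.ext this
    have hl' : β ≤ l := by
      by_contra h
      refine hl ?_
      have := hb l (by omega)
      rw [hdc] at this
      exact Subtype.ext this
    omega
  -- the decomposition ring homomorphism `R →+* R[X]`, `a ↦ ∑ aᵢ Xⁱ`
  obtain ⟨F, hF⟩ : ∃ F : (⨁ i, 𝒜 i) →+* Polynomial R,
      ∀ (i : ℕ) (a : 𝒜 i), F (DirectSum.of (fun i => 𝒜 i) i a) = Polynomial.monomial i (a : R) := by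
    refine ⟨DirectSum.toSemiring
      (fun i => (Polynomial.monomial i).toAddMonoidHom.comp (𝒜 i).subtype) ?_ ?_,
      fun i a => DirectSum.toSemiring_of _ _ _ _ _⟩
    · simp [SetLike.coe_gOne]
    · intro i j ai aj
      simp [SetLike.coe_gMul, Polynomial.monomial_mul_monomial]
  have coeffF : ∀ (z : ⨁ i, 𝒜 i) (j : ℕ), (F z).coeff j = (z j : R) := by
    intro z j
    induction z using DirectSum.induction_on with
    | zero => simp
    | of i a =>
      rw [hF, Polynomial.coeff_monomial, DirectSum.coe_of_apply]
      split_ifs <;> simp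
    | add x y hx hy => simp [hx, hy, DirectSum.add_apply]
  obtain ⟨D, hDc⟩ : ∃ D : R →+* Polynomial R, ∀ (x : R) (j : ℕ), (D x).coeff j = dc j x := by
    refine ⟨F.comp (DirectSum.decomposeRingEquiv 𝒜).toRingHom, fun x j => ?_⟩
    rw [RingHom.comp_apply, hdc]
    exact coeffF _ j
  -- the candidate polynomial attached to `v ∈ V`
  have coeffC : ∀ (v : R) (t : ℕ), (Polynomial.contract n (D v)).coeff t = dc (n * t) v := by
    intro v t
    rw [Polynomial.coeff_contract hn0, hDc, Nat.mul_comm]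
  have hPmemN : ∀ v : R, Polynomial.contract n (D v) ∈ N := by
    intro v
    rw [hN]
    intro t
    rw [coeffC]
    rcases Nat.eq_zero_or_pos t with rfl | ht
    · simp [Ideal.one_eq_top]
    · rw [hpow t ht]
      intro i hi
      rw [← hdc]
      exact dc_ne (dc_mem (n * t) v) (by omega)
  have hexpand : ∀ v : R, v ∈ V → Polynomial.expand R n (Polynomial.contract n (D v)) = D v := by
    intro v hv
    ext j
    rw [Polynomial.coeff_expand hn]
    split_ifs with h
    · rw [coeffC, hDc]
      rw [Nat.mul_div_cancel' h]
    · rw [hDc, hdc]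
      exact ((hV v).1 hv j h).symm
  have hCmul : ∀ v w : R, v ∈ V → w ∈ V →
      Polynomial.contract n (D (v * w)) =
        Polynomial.contract n (D v) * Polynomial.contract n (D w) := by
    intro v w hv hw
    apply Polynomial.expand_injective hn
    rw [map_mul (Polynomial.expand R n), hexpand _ (mul_mem hv hw), hexpand _ hv, hexpand _ hw,
      map_mul]
  have hCadd : ∀ v w : R, Polynomial.contract n (D (v + w)) =
      Polynomial.contract n (D v) + Polynomial.contract n (D w) := by
    intro v w
    ext j
    rw [Polynomial.coeff_add, coeffC, coeffC, coeffC, map_add]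
  have hCone : Polynomial.contract n (D 1) = 1 := by
    apply Polynomial.expand_injective hn
    rw [hexpand _ (one_mem V), map_one, map_one]
  -- the ring homomorphism `ρ : V →+* N`
  obtain ⟨rho, hrho⟩ : ∃ rho : ↥V →+* ↥N,
      ∀ v : ↥V, (rho v : Polynomial R) = Polynomial.contract n (D (v : R)) := by
    refine ⟨{ toFun := fun v => ⟨Polynomial.contract n (D (v : R)), hPmemN _⟩
              map_one' := ?_
              map_mul' := ?_
              map_zero' := ?_
              map_add' := ?_ }, fun v => rfl⟩
    · exact Subtype.ext (by simpa using hCone)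
    · intro v w
      refine Subtype.ext ?_
      show Polynomial.contract n (D ((v * w : ↥V) : R)) = _ * _
      rw [Subring.coe_mul, hCmul _ _ v.2 w.2]
    · refine Subtype.ext ?_
      show Polynomial.contract n (D ((0 : ↥V) : R)) = (0 : Polynomial R)
      ext j
      rw [coeffC]
      simp
    · intro v w
      refine Subtype.ext ?_
      show Polynomial.contract n (D ((v + w : ↥V) : R)) = _ + _
      rw [Subring.coe_add, hCadd]
  -- the key nilpotency estimate
  have hQmul : ∀ (p q : Polynomial R) (a b : ℕ),
      (∀ t i, i < n * t + a → dc i (p.coeff t) = 0) →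
      (∀ t i, i < n * t + b → dc i (q.coeff t) = 0) →
      ∀ t i, i < n * t + (a + b) → dc i ((p * q).coeff t) = 0 := by
    intro p q a b hp hq t i hi
    rw [Polynomial.coeff_mul, map_sum]
    refine Finset.sum_eq_zero ?_
    rintro ⟨x, y⟩ hxy
    rw [Finset.HasAntidiagonal.mem_antidiagonal] at hxy
    have hxyt : n * x + n * y = n * t := by rw [← hxy, Nat.mul_add]
    exact hmulC _ _ (n * x + a) (n * y + b)
      (fun j hj => hp x j (by omega)) (fun j hj => hq y j (by omega)) i (by omega)
  have hQpow : ∀ (p : Polynomial R),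
      (∀ t i, i < n * t + 1 → dc i (p.coeff t) = 0) →
      ∀ m : ℕ, 1 ≤ m → ∀ t i, i < n * t + m → dc i ((p ^ m).coeff t) = 0 := by
    intro p hp m
    induction m with
    | zero => omega
    | succ m ih =>
      intro _
      rcases Nat.eq_zero_or_pos m with rfl | hm
      · simpa [pow_one] using hp
      · rw [pow_succ]
        exact fun t i h => hQmul _ _ m 1 (ih hm) hp t i (by omega)
  have hBK : ∀ r : ↥N, (∀ t i, i < n * t + 1 → dc i ((r : Polynomial R).coeff t) = 0) →
      r ^ n ∈ K := by
    intro r hr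
    rw [hK]
    intro t
    have hcoe : ((r ^ n : ↥N) : Polynomial R) = (r : Polynomial R) ^ n :=
      SubmonoidClass.coe_pow r n
    rw [hcoe, hpow (t + 1) (by omega)]
    intro i hi
    rw [← hdc]
    rw [Nat.mul_add, Nat.mul_one] at hi
    exact hQpow _ hr n hn t i (by omega)
  constructor
  · -- nilpotency of high-degree homogeneous elements
    intro t d x hx hdt q hq
    refine ⟨n, ?_⟩
    rw [← map_pow, Ideal.Quotient.eq_zero_iff_mem]
    apply hBK
    intro s i hi
    rw [hq, Polynomial.coeff_monomial]
    split_ifs with h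
    · subst h
      exact dc_ne hx (by omega)
    · exact map_zero (dc i)
  · -- the isomorphism with the Veronese subring
    set π : ↥N →+* (↥N ⧸ K) ⧸ nilradical (↥N ⧸ K) :=
      (Ideal.Quotient.mk (nilradical (↥N ⧸ K))).comp (Ideal.Quotient.mk K) with hπ
    have hker : ∀ r : ↥N, (∀ t i, i < n * t + 1 → dc i ((r : Polynomial R).coeff t) = 0) →
        π r = 0 := by
      intro r hr
      rw [hπ, RingHom.comp_apply, Ideal.Quotient.eq_zero_iff_mem, mem_nilradical]
      exact ⟨n, by rw [← map_pow, Ideal.Quotient.eq_zero_iff_mem]; exact hBK r hr⟩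
    set Φ : ↥V →+* (↥N ⧸ K) ⧸ nilradical (↥N ⧸ K) := π.comp rho with hΦ
    have hinj : Function.Injective Φ := by
      rw [injective_iff_map_eq_zero]
      intro v hv
      obtain ⟨m, hm⟩ : ∃ m, (rho v) ^ m ∈ K := by
        have h1 : Ideal.Quotient.mk K (rho v) ∈ nilradical (↥N ⧸ K) := by
          rw [← Ideal.Quotient.eq_zero_iff_mem]
          exact hv
        rw [mem_nilradical] at h1
        obtain ⟨m, hm⟩ := h1
        exact ⟨m, by rwa [← map_pow, Ideal.Quotient.eq_zero_iff_mem] at hm⟩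
      have hcoeff : ∀ t, dc (n * t) ((v : R) ^ m) = 0 := by
        intro t
        have h2 : ((rho v ^ m : ↥N) : Polynomial R).coeff t ∈ I ^ (t + 1) := (hK _).1 hm t
        have h3 : ((rho v ^ m : ↥N) : Polynomial R) =
            Polynomial.contract n (D ((v : R) ^ m)) := by
          rw [← map_pow rho v m, hrho]
          norm_cast
        rw [h3, coeffC] at h2
        have h4 := hlow (t + 1) _ h2 (n * t) (by rw [Nat.mul_add, Nat.mul_one]; omega)
        rwa [dc_same (dc_mem _ _)] at h4
      have hzero : (v : R) ^ m = 0 := by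
        apply dc_all_zero
        intro i
        by_cases hdvd : n ∣ i
        · obtain ⟨t, rfl⟩ := hdvd
          exact hcoeff t
        · rw [hdc]
          exact (hV _).1 (pow_mem v.2 m) i hdvd
      have hv0 : (v : R) = 0 := IsNilpotent.eq_zero ⟨m, hzero⟩
      exact Subtype.ext hv0
    have hsurj : Function.Surjective Φ := by
      intro z
      obtain ⟨y, rfl⟩ := Ideal.Quotient.mk_surjective z
      obtain ⟨q, rfl⟩ := Ideal.Quotient.mk_surjective y
      set c : ℕ → R := fun t => (q : Polynomial R).coeff t with hc
      set v0 : R := ∑ t ∈ Finset.range ((q : Polynomial R).natDegree + 1), dc (n * t) (c t)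
        with hv0
      have hv0V : v0 ∈ V := by
        rw [hV]
        intro i hdvd
        rw [← hdc, hv0, map_sum]
        refine Finset.sum_eq_zero fun t _ => ?_
        exact dc_ne (dc_mem _ _) (fun h => hdvd (h ▸ ⟨t, rfl⟩))
      have hkey : ∀ t, dc (n * t) v0 = dc (n * t) (c t) := by
        intro t
        rw [hv0, map_sum]
        by_cases ht : t ∈ Finset.range ((q : Polynomial R).natDegree + 1)
        · rw [Finset.sum_eq_single t]
          · exact dc_same (dc_mem _ _)
          · intro s _ hst
            exact dc_ne (dc_mem _ _)
              (fun h => hst (Nat.eq_of_mul_eq_mul_left (by omega) h))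
          · intro h
            exact absurd ht h
        · have hct : c t = 0 := by
            rw [hc]
            refine Polynomial.coeff_eq_zero_of_natDegree_lt ?_
            simpa using ht
          rw [hct, map_zero]
          refine Finset.sum_eq_zero fun s hs => ?_
          refine dc_ne (dc_mem _ _) fun h => ?_
          have hst : s = t := Nat.eq_of_mul_eq_mul_left (by omega) h
          subst hst
          exact ht hs
      have hdiff : ∀ t i, i < n * t + 1 →
          dc i (((q - rho ⟨v0, hv0V⟩ : ↥N) : Polynomial R).coeff t) = 0 := by
        intro t i hi
        have hcoe : ((q - rho ⟨v0, hv0V⟩ : ↥N) : Polynomial R) =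
            (q : Polynomial R) - Polynomial.contract n (D v0) := by
          rw [AddSubgroupClass.coe_sub, hrho]
        rw [hcoe, Polynomial.coeff_sub, map_sub, coeffC]
        rcases Nat.lt_or_ge i (n * t) with h | h
        · rw [hlow t _ ((hN _).1 q.2 t) i h, dc_ne (dc_mem _ _) (by omega)]
          simp
        · have hi' : i = n * t := by omega
          subst hi'
          rw [dc_same (dc_mem _ _), hkey t]
          exact sub_self _
      have hπd : π (q - rho ⟨v0, hv0V⟩) = 0 := hker _ hdiff
      have hπq : π q = π (rho ⟨v0, hv0V⟩) := by
        rwa [map_sub, sub_eq_zero] at hπd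
      exact ⟨⟨v0, hv0V⟩, hπq.symm⟩
    exact ⟨(RingEquiv.ofBijective Φ ⟨hinj, hsurj⟩).symm⟩
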